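/- For all integers m, n ≥ 0 and |z| < 1, the double negative polylogarithm satisfies the identity Li_{−m,−n}(z) = Σ_{l=0}^{m} C(m,l) Li_{−l}(z) · Li_{−(m+n−l)}(z), where Li_{−m,−n}(z) = Σ_{n₁>n₂>0} n₁^m n₂^n z^{n₁}. -/

import Mathlib

/-- The polylogarithm at a negative index: `Li_{−s}(z) = Σ_{k≥1} k^s z^k`. -/
noncomputable def LiNeg (s : ℕ) (z : ℂ) : ℂ :=
  ∑' k : ℕ, ((k + 1 : ℕ) : ℂ) ^ s * z ^ (k + 1)

/-- The double polylogarithm at negative indices: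
`Li_{−s₁,−s₂}(z) = Σ_{n₁>n₂≥1} n₁^{s₁} n₂^{s₂} z^{n₁}`. -/
noncomputable def LiNeg₂ (s₁ s₂ : ℕ) (z : ℂ) : ℂ :=
  ∑' p : ℕ × ℕ,
    if 0 < p.2 ∧ p.2 < p.1 then ((p.1 : ℂ)) ^ s₁ * ((p.2 : ℂ)) ^ s₂ * z ^ p.1 else 0

open Finset

lemma summable_norm_aux (s : ℕ) {z : ℂ} (hz : ‖z‖ < 1) :
    Summable (fun k : ℕ => ‖((k + 1 : ℕ) : ℂ) ^ s * z ^ (k + 1)‖) := by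
  have h : Summable (fun k : ℕ => (k : ℝ) ^ s * ‖z‖ ^ k) :=
    summable_pow_mul_geometric_of_norm_lt_one s (by simpa using hz)
  have h2 := (summable_nat_add_iff 1).2 h
  refine h2.congr fun k => ?_
  rw [norm_mul, norm_pow, norm_pow, Complex.norm_natCast]

set_option maxHeartbeats 1000000 in
theorem stmt9 (m n : ℕ) (z : ℂ) (hz : ‖z‖ < 1) :
    LiNeg₂ m n z
      = ∑ l ∈ Finset.range (m + 1),
          (m.choose l : ℂ) * LiNeg l z * LiNeg (m + n - l) z := by
  have hprod : ∀ l, LiNeg l z * LiNeg (m + n - l) z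
      = ∑' p : ℕ × ℕ, (((p.1 + 1 : ℕ) : ℂ) ^ l * z ^ (p.1 + 1)) *
          (((p.2 + 1 : ℕ) : ℂ) ^ (m + n - l) * z ^ (p.2 + 1)) :=
    fun l => tsum_mul_tsum_of_summable_norm (summable_norm_aux l hz)
      (summable_norm_aux (m + n - l) hz)
  have hsum2 : ∀ l, Summable (fun p : ℕ × ℕ =>
      (((p.1 + 1 : ℕ) : ℂ) ^ l * z ^ (p.1 + 1)) *
        (((p.2 + 1 : ℕ) : ℂ) ^ (m + n - l) * z ^ (p.2 + 1))) :=
    fun l => summable_mul_of_summable_norm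
      (f := fun a : ℕ => ((a + 1 : ℕ) : ℂ) ^ l * z ^ (a + 1))
      (g := fun b : ℕ => ((b + 1 : ℕ) : ℂ) ^ (m + n - l) * z ^ (b + 1))
      (summable_norm_aux l hz) (summable_norm_aux (m + n - l) hz)
  calc LiNeg₂ m n z
      = ∑' p : ℕ × ℕ, ((p.1 + p.2 + 2 : ℕ) : ℂ) ^ m * ((p.2 + 1 : ℕ) : ℂ) ^ n *
          z ^ (p.1 + p.2 + 2) := by
        rw [LiNeg₂]
        set f : ℕ × ℕ → ℂ := fun p =>
          if 0 < p.2 ∧ p.2 < p.1 then ((p.1 : ℂ)) ^ m * ((p.2 : ℂ)) ^ n * z ^ p.1 else 0 with hf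
        set g : ℕ × ℕ → ℕ × ℕ := fun q => (q.1 + q.2 + 2, q.2 + 1) with hg
        have hginj : Function.Injective g := by
          intro q q' h
          simp only [hg, Prod.mk.injEq] at h
          ext <;> omega
        have hsupp : Function.support f ⊆ Set.range g := by
          intro p hp
          have hcond : 0 < p.2 ∧ p.2 < p.1 := by
            by_contra hc
            exact hp (by simp [hf, hc])
          exact ⟨(p.1 - p.2 - 1, p.2 - 1), by simp only [hg]; ext <;> simp <;> omega⟩
        have := hginj.tsum_eq (f := f) hsupp
        rw [← this]
        refine tsum_congr fun q => ?_
        have hcond : 0 < (g q).2 ∧ (g q).2 < (g q).1 := by simp [hg]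
        simp only [hf, hg, if_pos hcond]; exact if_pos hcond
    _ = ∑' p : ℕ × ℕ, ∑ l ∈ Finset.range (m + 1),
          (m.choose l : ℂ) * ((((p.1 + 1 : ℕ) : ℂ) ^ l * z ^ (p.1 + 1)) *
            (((p.2 + 1 : ℕ) : ℂ) ^ (m + n - l) * z ^ (p.2 + 1))) := by
        refine tsum_congr fun p => ?_
        obtain ⟨a, b⟩ := p
        have key : ∀ l ∈ Finset.range (m + 1),
            (m.choose l : ℂ) * ((((a + 1 : ℕ) : ℂ) ^ l * z ^ (a + 1)) *
              (((b + 1 : ℕ) : ℂ) ^ (m + n - l) * z ^ (b + 1)))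
            = (((a + 1 : ℕ) : ℂ) ^ l * ((b + 1 : ℕ) : ℂ) ^ (m - l) * (m.choose l : ℂ)) *
              (((b + 1 : ℕ) : ℂ) ^ n * z ^ (a + b + 2)) := by
          intro l hl
          have hlm : l ≤ m := by simp at hl; omega
          have h1 : m + n - l = (m - l) + n := by omega
          have h2 : (a + b + 2) = (a + 1) + (b + 1) := by omega
          rw [h1, h2, pow_add, pow_add]
          ring
        rw [Finset.sum_congr rfl key, ← Finset.sum_mul, ← add_pow]
        push_cast
        ring
    _ = ∑ l ∈ Finset.range (m + 1),
          (m.choose l : ℂ) * LiNeg l z * LiNeg (m + n - l) z := by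
        rw [Summable.tsum_finsetSum (fun l _ => ((hsum2 l).mul_left _))]
        refine Finset.sum_congr rfl fun l _ => ?_
        rw [tsum_mul_left, ← hprod l, mul_assoc]
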